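/- Let (X, ρ) be a finite distance space that is strongly d-embeddable for an integer d ≥ 1, and let Y ⊆ X be an independent set of size d + 1. Then Y is a metric basis: if φ₁ and φ₂ are isometric embeddings of (X, ρ) into ℝ^d that agree on Y (i.e., φ₁(y) = φ₂(y) for all y ∈ Y), then φ₁ = φ₂. -/

import Mathlib

/-- `(X, ρ)` is a distance space: `ρ` is symmetric, nonnegative and vanishes on the
diagonal on the points of `X`. -/
def IsDistance {α : Type*} (X : Finset α) (ρ : α → α → ℝ) : Prop :=
  (∀ x ∈ X, ∀ y ∈ X, ρ x y = ρ y x) ∧ (∀ x ∈ X, ∀ y ∈ X, 0 ≤ ρ x y) ∧ (∀ x ∈ X, ρ x x = 0)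

/-- `(X, ρ)` is isometrically embeddable into `ℝ^d`. -/
def IsEmbeddable {α : Type*} (X : Finset α) (ρ : α → α → ℝ) (d : ℕ) : Prop :=
  ∃ φ : α → EuclideanSpace ℝ (Fin d), ∀ x ∈ X, ∀ y ∈ X, ρ x y = dist (φ x) (φ y)

/-- `(X, ρ)` is strongly `d`-embeddable: `d`-embeddable but (for `d ≥ 1`)
not `(d-1)`-embeddable. -/
def IsStronglyEmbeddable {α : Type*} (X : Finset α) (ρ : α → α → ℝ) (d : ℕ) : Prop :=
  IsEmbeddable X ρ d ∧ (0 < d → ¬ IsEmbeddable X ρ (d - 1))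

/-- A nonempty set `Y` with `|Y| = r + 1` is independent if `(Y, ρ)` is strongly
`r`-embeddable. -/
def IsIndependent {α : Type*} (Y : Finset α) (ρ : α → α → ℝ) : Prop :=
  Y.Nonempty ∧ IsStronglyEmbeddable Y ρ (Y.card - 1)

open scoped RealInnerProductSpace

lemma eqA {n : ℕ} {s : Set (EuclideanSpace ℝ (Fin n))}
    (hs : vectorSpan ℝ s = ⊤) {p q : EuclideanSpace ℝ (Fin n)}
    (h : ∀ v ∈ s, dist p v = dist q v) : p = q := by
  have f : ∀ u ∈ s, 2 * ⟪p, u⟫ - 2 * ⟪q, u⟫ = ‖p‖ ^ 2 - ‖q‖ ^ 2 := by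
    intro u hu
    have h2 : ‖p - u‖ ^ 2 = ‖q - u‖ ^ 2 := by
      rw [← dist_eq_norm, ← dist_eq_norm, h u hu]
    rw [norm_sub_sq_real, norm_sub_sq_real] at h2
    linarith
  have key : ∀ v ∈ s, ∀ w ∈ s, ⟪p - q, v - w⟫ = 0 := by
    intro v hv w hw
    have fv := f v hv; have fw := f w hw
    simp only [inner_sub_left, inner_sub_right]
    linarith
  have hmem : ∀ u ∈ vectorSpan ℝ s, ⟪p - q, u⟫ = 0 := by
    intro u hu
    rw [vectorSpan_def] at hu
    induction hu using Submodule.span_induction with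
    | mem x hx =>
      obtain ⟨v, hv, w, hw, rfl⟩ := hx
      exact key v hv w hw
    | zero => simp
    | add x y _ _ hx hy => rw [inner_add_right, hx, hy]; ring
    | smul a x _ hx => rw [real_inner_smul_right, hx]; ring
  have h0 : ⟪p - q, p - q⟫ = 0 := hmem _ (hs ▸ Submodule.mem_top)
  have := inner_self_eq_zero.mp h0
  exact sub_eq_zero.mp this

lemma spanTop {α : Type*} {Y : Finset α} {ρ : α → α → ℝ} {d : ℕ} (hd : 1 ≤ d)
    (hnot : ¬ IsEmbeddable Y ρ (d - 1))
    (φ : α → EuclideanSpace ℝ (Fin d))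
    (h : ∀ x ∈ Y, ∀ y ∈ Y, ρ x y = dist (φ x) (φ y)) :
    vectorSpan ℝ (φ '' (Y : Set α)) = ⊤ := by
  by_contra hne
  apply hnot
  set V : Submodule ℝ (EuclideanSpace ℝ (Fin d)) := vectorSpan ℝ (φ '' (Y : Set α)) with hV
  have hfin : Module.finrank ℝ V < d := by
    have h1 : Module.finrank ℝ V < Module.finrank ℝ (EuclideanSpace ℝ (Fin d)) :=
      Submodule.finrank_lt hne
    simpa [finrank_euclideanSpace_fin] using h1
  set k := Module.finrank ℝ V with hk
  have hkd : k ≤ d - 1 := by omega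
  let B := stdOrthonormalBasis ℝ V
  -- key identity
  have hsum : ∀ v : V, ∑ i : Fin k, (⟪(B i : EuclideanSpace ℝ (Fin d)), (v : EuclideanSpace ℝ (Fin d))⟫) ^ 2 = ‖(v : EuclideanSpace ℝ (Fin d))‖ ^ 2 := by
    intro v
    have h1 : ∀ i : Fin k, ⟪(B i : EuclideanSpace ℝ (Fin d)), (v : EuclideanSpace ℝ (Fin d))⟫ = B.repr v i := by
      intro i
      rw [B.repr_apply_apply v i, Submodule.coe_inner]
    simp_rw [h1]
    have h2 : ‖B.repr v‖ = ‖v‖ := B.repr.norm_map v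
    have h3 : ‖B.repr v‖ ^ 2 = ∑ i : Fin k, (B.repr v i) ^ 2 := by
      rw [EuclideanSpace.norm_eq]
      rw [Real.sq_sqrt (by positivity)]
      simp [Real.norm_eq_abs, sq_abs]
      rfl
    rw [Submodule.norm_coe, ← h2, h3]
  refine ⟨fun x => WithLp.toLp 2 (fun j : Fin (d - 1) =>
    if hj : (j : ℕ) < k then ⟪(B ⟨j, hj⟩ : EuclideanSpace ℝ (Fin d)), φ x⟫ else 0), ?_⟩
  intro x hx y hy
  rw [h x hx y hy]
  have hw : φ x - φ y ∈ V := by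
    have := vsub_mem_vectorSpan ℝ (Set.mem_image_of_mem φ (Finset.mem_coe.2 hx))
      (Set.mem_image_of_mem φ (Finset.mem_coe.2 hy))
    simpa [vsub_eq_sub] using this
  set w : V := ⟨φ x - φ y, hw⟩ with hwdef
  rw [EuclideanSpace.dist_eq, EuclideanSpace.dist_eq]
  congr 1
  simp only [Real.dist_eq, sq_abs, PiLp.toLp_apply]
  refine Eq.symm ?_
  set g : ℕ → ℝ := fun j =>
    if hj : j < k then (⟪(B ⟨j, hj⟩ : EuclideanSpace ℝ (Fin d)), φ x - φ y⟫) ^ 2 else 0 with hg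
  have hcoord : ∀ j : Fin (d - 1),
      ((if hj : (j : ℕ) < k then ⟪(B ⟨j, hj⟩ : EuclideanSpace ℝ (Fin d)), φ x⟫ else 0) -
       (if hj : (j : ℕ) < k then ⟪(B ⟨j, hj⟩ : EuclideanSpace ℝ (Fin d)), φ y⟫ else 0)) ^ 2
      = g (j : ℕ) := by
    intro j
    by_cases hj : (j : ℕ) < k
    · simp only [hg, dif_pos hj, inner_sub_right]
    · simp [hg, dif_neg hj]
  calc ∑ j : Fin (d - 1),
        ((if hj : (j : ℕ) < k then ⟪(B ⟨j, hj⟩ : EuclideanSpace ℝ (Fin d)), φ x⟫ else 0) -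
         (if hj : (j : ℕ) < k then ⟪(B ⟨j, hj⟩ : EuclideanSpace ℝ (Fin d)), φ y⟫ else 0)) ^ 2
      = ∑ j : Fin (d - 1), g (j : ℕ) := by
        exact Finset.sum_congr rfl fun j _ => hcoord j
    _ = ∑ j ∈ Finset.range (d - 1), g j := Fin.sum_univ_eq_sum_range g (d - 1)
    _ = ∑ j ∈ Finset.range k, g j := by
        refine (Finset.sum_subset (Finset.range_subset_range.2 hkd) ?_).symm
        intro j _ hj
        simp only [Finset.mem_range, not_lt] at hj
        simp [hg, dif_neg (not_lt.2 hj)]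
    _ = ∑ i : Fin k, g (i : ℕ) := (Fin.sum_univ_eq_sum_range g k).symm
    _ = ∑ i : Fin k, (⟪(B i : EuclideanSpace ℝ (Fin d)), (w : EuclideanSpace ℝ (Fin d))⟫) ^ 2 := by
        refine Finset.sum_congr rfl fun i _ => ?_
        simp [hg, dif_pos i.isLt, hwdef]
    _ = ‖(w : EuclideanSpace ℝ (Fin d))‖ ^ 2 := hsum w
    _ = ∑ i, (φ x i - φ y i) ^ 2 := by
        rw [EuclideanSpace.norm_eq, Real.sq_sqrt (by positivity)]
        simp [hwdef, Real.norm_eq_abs, sq_abs]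

/-- an independent set of size `d + 1` in a strongly `d`-embeddable finite
distance space is a metric basis: two isometric embeddings into `ℝ^d` agreeing on it
agree everywhere on `X`. -/
theorem stmt7 {α : Type*} (X : Finset α) (ρ : α → α → ℝ) (hD : IsDistance X ρ)
    (d : ℕ) (hd : 1 ≤ d) (hX : IsStronglyEmbeddable X ρ d)
    (Y : Finset α) (hYX : Y ⊆ X) (hY : IsIndependent Y ρ) (hYcard : Y.card = d + 1)
    (φ₁ φ₂ : α → EuclideanSpace ℝ (Fin d))
    (h₁ : ∀ x ∈ X, ∀ y ∈ X, ρ x y = dist (φ₁ x) (φ₁ y))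
    (h₂ : ∀ x ∈ X, ∀ y ∈ X, ρ x y = dist (φ₂ x) (φ₂ y))
    (hagree : ∀ y ∈ Y, φ₁ y = φ₂ y) :
    ∀ x ∈ X, φ₁ x = φ₂ x := by
  obtain ⟨hYne, -, hYnot⟩ := hY
  have hcard : Y.card - 1 = d := by omega
  rw [hcard] at hYnot
  have hnot : ¬ IsEmbeddable Y ρ (d - 1) := hYnot (by omega)
  have hspan : vectorSpan ℝ (φ₁ '' (Y : Set α)) = ⊤ :=
    spanTop hd hnot φ₁ (fun x hx y hy => h₁ x (hYX hx) y (hYX hy))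
  intro x hx
  refine eqA hspan ?_
  rintro v ⟨y, hy, rfl⟩
  have hyY : y ∈ Y := hy
  calc dist (φ₁ x) (φ₁ y) = ρ x y := (h₁ x hx y (hYX hyY)).symm
    _ = dist (φ₂ x) (φ₂ y) := h₂ x hx y (hYX hyY)
    _ = dist (φ₂ x) (φ₁ y) := by rw [hagree y hyY]
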